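/- Let J be an ideal of A such that A/J is projective as a k-module. Suppose there exist an idempotent e ∈ J, a k-subalgebra E of the corner ring eAe with identity element e, and an E-submodule P of the left E-module eA that is projective as an E-module, such that the natural multiplication map Ae ⊗_E P → J, a ⊗ p ↦ ap, is bijective. Then J² = J and J is projective as a left A-module. -/

import Mathlib

universe u

open TensorProduct

set_option maxHeartbeats 1000000
set_option synthInstance.maxHeartbeats 1000000

noncomputable section

/-- The residue field `k(𝔭)` of `k` at a prime ideal `𝔭`. -/
abbrev resField (k : Type u) [CommRing k] (p : Ideal k) [p.IsPrime] : Type u :=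
  IsLocalRing.ResidueField (Localization.AtPrime p)

/-- A prime ideal `𝔭` has height at most one iff the localization `k_𝔭` has Krull
dimension at most one. -/
def HeightLEOne {k : Type u} [CommRing k] (p : Ideal k) [p.IsPrime] : Prop :=
  ringKrullDim (Localization.AtPrime p) ≤ 1

section QuotAlg

variable {k : Type u} [CommRing k] {A : Type u} [Ring A] [Algebra k A]

/-- The quotient of `A` by a two-sided ideal `J`, as a `k`-algebra. -/
instance quotAlgebra (J : TwoSidedIdeal A) : Algebra k J.ringCon.Quotient where
  algebraMap := ((RingCon.mk' J.ringCon : A →+* J.ringCon.Quotient).comp (algebraMap k A))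
  commutes' := fun c x => by
    obtain ⟨a, rfl⟩ := Quotient.exists_rep x
    show (RingCon.mk' J.ringCon) (algebraMap k A c) * (RingCon.mk' J.ringCon) a
        = (RingCon.mk' J.ringCon) a * (RingCon.mk' J.ringCon) (algebraMap k A c)
    rw [← map_mul, ← map_mul, Algebra.commutes]
  smul_def' := fun c x => by
    obtain ⟨a, rfl⟩ := Quotient.exists_rep x
    show _ = (RingCon.mk' J.ringCon) (algebraMap k A c) * (RingCon.mk' J.ringCon) a
    rw [← map_mul, ← Algebra.smul_def]
    rfl

/-- The two-sided ideal `J` is idempotent: `J * J = J` (as `k`-submodules of `A`). -/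
def IsIdempotentIdeal (k : Type u) [CommRing k] {A : Type u} [Ring A] [Algebra k A]
    (J : TwoSidedIdeal A) : Prop :=
  (J.asIdeal.restrictScalars k) * (J.asIdeal.restrictScalars k) = J.asIdeal.restrictScalars k

/-- A `k`-algebra `E` (finitely generated as a `k`-module) is `k`-semisimple if
`E(𝔭)` is a semisimple ring for every prime ideal `𝔭` of `k`. -/
def IsKSemisimple (k : Type u) [CommRing k] (E : Type u) [Ring E] [Algebra k E] : Prop :=
  ∀ (p : Ideal k) [p.IsPrime], IsSemisimpleRing (resField k p ⊗[k] E)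

/-- `J` is a heredity ideal of the `k`-algebra `A`:  (0) `A/J` is `k`-projective;
(1) `J` is projective as a left `A`-module;  (2) `J² = J`;
(3) `End_A(J)` is `k`-semisimple. -/
def IsHeredityIdeal (k : Type u) [CommRing k] (A : Type u) [Ring A] [Algebra k A]
    (J : TwoSidedIdeal A) : Prop :=
  Module.Projective k (A ⧸ (J.asIdeal.restrictScalars k)) ∧
  Module.Projective A J.asIdeal ∧
  IsIdempotentIdeal k J ∧
  IsKSemisimple k (Module.End A J.asIdeal)

/-- The natural map `J(𝔭) = k(𝔭) ⊗ J → A(𝔭) = k(𝔭) ⊗ A`. -/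
def fibreMap (J : TwoSidedIdeal A) (p : Ideal k) [p.IsPrime] :
    resField k p ⊗[k] J.asIdeal →ₗ[k] resField k p ⊗[k] A :=
  LinearMap.lTensor (resField k p) ((J.asIdeal.restrictScalars k).subtype)

/-- `J̄(𝔭)`:  the image of the natural map `J(𝔭) → A(𝔭)`, as a two-sided ideal
of `A(𝔭)`. -/
def fibreIdeal (J : TwoSidedIdeal A) (p : Ideal k) [p.IsPrime] :
    TwoSidedIdeal (resField k p ⊗[k] A) :=
  TwoSidedIdeal.span (Set.range (fibreMap J p))

/-- The natural surjection `J(𝔭) → J̄(𝔭)`. -/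
def fibreProj (J : TwoSidedIdeal A) (p : Ideal k) [p.IsPrime] :
    resField k p ⊗[k] J.asIdeal →ₗ[k]
      ((fibreIdeal J p).asIdeal.restrictScalars k) :=
  LinearMap.codRestrict _ (fibreMap J p) fun x =>
    TwoSidedIdeal.subset_span (Set.mem_range_self x)

end QuotAlg

section Corner

/-- An idempotent element of a ring `A`. -/
structure Idem (A : Type u) [Ring A] where
  e : A
  idem : e * e = e

variable {A : Type u} [Ring A]

/-- The corner ring `eAe = {x | e * x * e = x}` of an idempotent `e`. -/
def Corner (f : Idem A) : Type u := {x : A // f.e * x * f.e = x}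

namespace Corner

variable {f : Idem A}

lemma e_mul (x : Corner f) : f.e * x.1 = x.1 := by
  calc f.e * x.1 = f.e * (f.e * x.1 * f.e) := by rw [x.2]
    _ = (f.e * f.e) * x.1 * f.e := by rw [← mul_assoc, ← mul_assoc]
    _ = f.e * x.1 * f.e := by rw [f.idem]
    _ = x.1 := x.2

lemma mul_e (x : Corner f) : x.1 * f.e = x.1 := by
  calc x.1 * f.e = (f.e * x.1 * f.e) * f.e := by rw [x.2]
    _ = f.e * x.1 * (f.e * f.e) := by rw [mul_assoc]
    _ = f.e * x.1 * f.e := by rw [f.idem]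
    _ = x.1 := x.2

instance : Add (Corner f) := ⟨fun x y => ⟨x.1 + y.1, by rw [mul_add, add_mul, x.2, y.2]⟩⟩
instance : Zero (Corner f) := ⟨⟨0, by simp⟩⟩
instance : SMul ℕ (Corner f) := ⟨fun n x => ⟨n • x.1, by rw [mul_smul_comm, smul_mul_assoc, x.2]⟩⟩
instance : Neg (Corner f) := ⟨fun x => ⟨-x.1, by rw [mul_neg, neg_mul, x.2]⟩⟩
instance : Sub (Corner f) := ⟨fun x y => ⟨x.1 - y.1, by rw [mul_sub, sub_mul, x.2, y.2]⟩⟩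
instance : SMul ℤ (Corner f) := ⟨fun n x => ⟨n • x.1, by rw [mul_smul_comm, smul_mul_assoc, x.2]⟩⟩
instance : Mul (Corner f) :=
  ⟨fun x y => ⟨x.1 * y.1, by rw [mul_assoc, mul_assoc, mul_e y, ← mul_assoc, e_mul x]⟩⟩
instance : One (Corner f) := ⟨⟨f.e, by rw [f.idem, f.idem]⟩⟩

instance addCommGroup : AddCommGroup (Corner f) :=
  Function.Injective.addCommGroup _ Subtype.coe_injective
    rfl (fun _ _ ↦ rfl) (fun _ ↦ rfl) (fun _ _ ↦ rfl) (fun _ _ ↦ rfl) (fun _ _ ↦ rfl)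

instance ring : Ring (Corner f) :=
  { Corner.addCommGroup with
    mul := (· * ·)
    one := 1
    mul_assoc := fun x y z => Subtype.ext (mul_assoc x.1 y.1 z.1)
    one_mul := fun x => Subtype.ext (e_mul x)
    mul_one := fun x => Subtype.ext (mul_e x)
    left_distrib := fun x y z => Subtype.ext (mul_add x.1 y.1 z.1)
    right_distrib := fun x y z => Subtype.ext (add_mul x.1 y.1 z.1)
    zero_mul := fun x => Subtype.ext (zero_mul x.1)
    mul_zero := fun x => Subtype.ext (mul_zero x.1) }

end Corner

/-- The left ideal `Ae = {x | x * e = x}` of the idempotent `e`. -/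
def rightFix (f : Idem A) : Type u := {x : A // x * f.e = x}

/-- The right ideal `eA = {x | e * x = x}` of the idempotent `e`. -/
def leftFix (f : Idem A) : Type u := {x : A // f.e * x = x}

namespace rightFix

variable {f : Idem A}

instance : Add (rightFix f) := ⟨fun x y => ⟨x.1 + y.1, by rw [add_mul, x.2, y.2]⟩⟩
instance : Zero (rightFix f) := ⟨⟨0, by simp⟩⟩
instance : SMul ℕ (rightFix f) := ⟨fun n x => ⟨n • x.1, by rw [smul_mul_assoc, x.2]⟩⟩
instance : Neg (rightFix f) := ⟨fun x => ⟨-x.1, by rw [neg_mul, x.2]⟩⟩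
instance : Sub (rightFix f) := ⟨fun x y => ⟨x.1 - y.1, by rw [sub_mul, x.2, y.2]⟩⟩
instance : SMul ℤ (rightFix f) := ⟨fun n x => ⟨n • x.1, by rw [smul_mul_assoc, x.2]⟩⟩

instance addCommGroup : AddCommGroup (rightFix f) :=
  Function.Injective.addCommGroup _ Subtype.coe_injective
    rfl (fun _ _ ↦ rfl) (fun _ ↦ rfl) (fun _ _ ↦ rfl) (fun _ _ ↦ rfl) (fun _ _ ↦ rfl)

/-- `Ae` is a right module over the corner ring `eAe`. -/
instance : SMul (Corner f)ᵐᵒᵖ (rightFix f) :=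
  ⟨fun c x => ⟨x.1 * c.unop.1, by rw [mul_assoc, Corner.mul_e]⟩⟩

end rightFix

namespace leftFix

variable {f : Idem A}

instance : Add (leftFix f) := ⟨fun x y => ⟨x.1 + y.1, by rw [mul_add, x.2, y.2]⟩⟩
instance : Zero (leftFix f) := ⟨⟨0, by simp⟩⟩
instance : SMul ℕ (leftFix f) := ⟨fun n x => ⟨n • x.1, by rw [mul_smul_comm, x.2]⟩⟩
instance : Neg (leftFix f) := ⟨fun x => ⟨-x.1, by rw [mul_neg, x.2]⟩⟩
instance : Sub (leftFix f) := ⟨fun x y => ⟨x.1 - y.1, by rw [mul_sub, x.2, y.2]⟩⟩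
instance : SMul ℤ (leftFix f) := ⟨fun n x => ⟨n • x.1, by rw [mul_smul_comm, x.2]⟩⟩

instance addCommGroup : AddCommGroup (leftFix f) :=
  Function.Injective.addCommGroup _ Subtype.coe_injective
    rfl (fun _ _ ↦ rfl) (fun _ ↦ rfl) (fun _ _ ↦ rfl) (fun _ _ ↦ rfl) (fun _ _ ↦ rfl)

/-- `eA` is a left module over the corner ring `eAe`. -/
instance : SMul (Corner f) (leftFix f) :=
  ⟨fun c x => ⟨c.1 * x.1, by rw [← mul_assoc, Corner.e_mul]⟩⟩

instance : Module (Corner f) (leftFix f) where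
  one_smul x := Subtype.ext x.2
  mul_smul c d x := Subtype.ext (mul_assoc c.1 d.1 x.1)
  smul_zero c := Subtype.ext (mul_zero c.1)
  smul_add c x y := Subtype.ext (mul_add c.1 x.1 y.1)
  add_smul c d x := Subtype.ext (add_mul c.1 d.1 x.1)
  zero_smul x := Subtype.ext (zero_mul x.1)

end leftFix

variable (f : Idem A)

/-- The multiplication map `Ae × eA → A`, as a `ℤ`-bilinear map. -/
def cornerMulBil : rightFix f →ₗ[ℤ] leftFix f →ₗ[ℤ] A :=
  LinearMap.mk₂ ℤ (fun x y => x.1 * y.1)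
    (fun x x' y => add_mul x.1 x'.1 y.1)
    (fun c x y => smul_mul_assoc c x.1 y.1)
    (fun x y y' => mul_add x.1 y.1 y'.1)
    (fun c x y => mul_smul_comm c x.1 y.1)

/-- The subgroup of balancing relations in `Ae ⊗_ℤ eA`, whose quotient
realizes `Ae ⊗_{eAe} eA`. -/
def cornerRel : Submodule ℤ (rightFix f ⊗[ℤ] leftFix f) :=
  Submodule.span ℤ
    {t | ∃ (x : rightFix f) (c : Corner f) (y : leftFix f),
      t = (MulOpposite.op c • x) ⊗ₜ[ℤ] y - x ⊗ₜ[ℤ] (c • y)}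

/-- The balanced tensor product `Ae ⊗_{eAe} eA`, realized as a quotient of `Ae ⊗_ℤ eA`. -/
def cornerTensor : Type u := (rightFix f ⊗[ℤ] leftFix f) ⧸ cornerRel f

instance : AddCommGroup (cornerTensor f) :=
  inferInstanceAs (AddCommGroup ((rightFix f ⊗[ℤ] leftFix f) ⧸ cornerRel f))

instance : Module ℤ (cornerTensor f) :=
  inferInstanceAs (Module ℤ ((rightFix f ⊗[ℤ] leftFix f) ⧸ cornerRel f))

end Corner

section CornerSub

variable {k : Type u} [CommRing k] {A : Type u} [Ring A] [Algebra k A]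

namespace rightFix

variable {f : Idem A}

instance : SMul k (rightFix f) := ⟨fun c x => ⟨c • x.1, by rw [smul_mul_assoc, x.2]⟩⟩

instance : Module k (rightFix f) :=
  Function.Injective.module k
    { toFun := fun x : rightFix f => x.1, map_zero' := rfl, map_add' := fun _ _ => rfl }
    Subtype.coe_injective (fun _ _ => rfl)

end rightFix

namespace leftFix

variable {f : Idem A}

instance : SMul k (leftFix f) := ⟨fun c x => ⟨c • x.1, by rw [mul_smul_comm, x.2]⟩⟩

instance : Module k (leftFix f) :=
  Function.Injective.module k
    { toFun := fun x : leftFix f => x.1, map_zero' := rfl, map_add' := fun _ _ => rfl }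
    Subtype.coe_injective (fun _ _ => rfl)

end leftFix

/-- A `k`-subalgebra `E` of the corner ring `eAe` with identity element `e`. -/
structure CornerSubalgebra (k : Type u) (A : Type u) [CommRing k] [Ring A] [Algebra k A]
    extends Idem A where
  carrier : Submodule k A
  e_mem : e ∈ carrier
  mul_mem : ∀ {x y : A}, x ∈ carrier → y ∈ carrier → x * y ∈ carrier
  corner_fix : ∀ {x : A}, x ∈ carrier → e * x * e = x

namespace CornerSubalgebra

variable (S : CornerSubalgebra k A)

/-- The underlying type of the subalgebra `E ⊆ eAe`. -/
def E : Type u := ↥S.carrier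

instance : AddCommGroup S.E := inferInstanceAs (AddCommGroup ↥S.carrier)
instance : Module k S.E := inferInstanceAs (Module k ↥S.carrier)

lemma e_mul_val (x : S.E) : S.e * x.1 = x.1 :=
  Corner.e_mul (f := S.toIdem) ⟨x.1, S.corner_fix x.2⟩

lemma mul_e_val (x : S.E) : x.1 * S.e = x.1 :=
  Corner.mul_e (f := S.toIdem) ⟨x.1, S.corner_fix x.2⟩

instance : Mul S.E := ⟨fun x y => ⟨x.1 * y.1, S.mul_mem x.2 y.2⟩⟩
instance : One S.E := ⟨⟨S.e, S.e_mem⟩⟩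

instance : Ring S.E :=
  { (inferInstance : AddCommGroup S.E) with
    mul := (· * ·)
    one := 1
    mul_assoc := fun x y z => Subtype.ext (mul_assoc x.1 y.1 z.1)
    one_mul := fun x => Subtype.ext (S.e_mul_val x)
    mul_one := fun x => Subtype.ext (S.mul_e_val x)
    left_distrib := fun x y z => Subtype.ext (mul_add x.1 y.1 z.1)
    right_distrib := fun x y z => Subtype.ext (add_mul x.1 y.1 z.1)
    zero_mul := fun x => Subtype.ext (zero_mul x.1)
    mul_zero := fun x => Subtype.ext (mul_zero x.1) }

instance : Algebra k S.E where
  smul := (· • ·)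
  algebraMap :=
    { toFun := fun c => ⟨c • S.e, S.carrier.smul_mem c S.e_mem⟩
      map_one' := Subtype.ext (one_smul k S.e)
      map_mul' := fun a b => Subtype.ext (by
        show (a * b) • S.e = (a • S.e) * (b • S.e)
        rw [smul_mul_assoc, mul_smul_comm, S.idem, mul_smul])
      map_zero' := Subtype.ext (zero_smul k S.e)
      map_add' := fun a b => Subtype.ext (add_smul a b S.e) }
  commutes' := fun c x => Subtype.ext (by
    show (c • S.e) * x.1 = x.1 * (c • S.e)
    rw [smul_mul_assoc, mul_smul_comm, S.e_mul_val, S.mul_e_val])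
  smul_def' := fun c x => Subtype.ext (by
    show c • x.1 = (c • S.e) * x.1
    rw [smul_mul_assoc, S.e_mul_val])

/-- `eA` is a left module over `E`. -/
instance : SMul S.E (leftFix S.toIdem) :=
  ⟨fun c x => ⟨c.1 * x.1, by
    show S.e * (c.1 * x.1) = c.1 * x.1
    rw [← mul_assoc, S.e_mul_val]⟩⟩

instance : Module S.E (leftFix S.toIdem) where
  one_smul x := Subtype.ext (by
    show (1 : S.E).1 * x.1 = x.1
    exact x.2)
  mul_smul c d x := Subtype.ext (mul_assoc c.1 d.1 x.1)
  smul_zero c := Subtype.ext (mul_zero c.1)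
  smul_add c x y := Subtype.ext (mul_add c.1 x.1 y.1)
  add_smul c d x := Subtype.ext (add_mul c.1 d.1 x.1)
  zero_smul x := Subtype.ext (zero_mul x.1)

instance : IsScalarTower k S.E (leftFix S.toIdem) :=
  ⟨fun c s x => Subtype.ext (smul_mul_assoc c s.1 x.1)⟩

/-- `Ae` is a right module over `E`. -/
instance : SMul S.Eᵐᵒᵖ (rightFix S.toIdem) :=
  ⟨fun c x => ⟨x.1 * c.unop.1, by
    show x.1 * c.unop.1 * S.e = x.1 * c.unop.1
    rw [mul_assoc, S.mul_e_val]⟩⟩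

variable (P : Submodule S.E (leftFix S.toIdem))

/-- The multiplication map `Ae × P → A` as a `k`-bilinear map. -/
def mulBil : rightFix S.toIdem →ₗ[k] ↥P →ₗ[k] A :=
  LinearMap.mk₂ k (fun x p => x.1 * p.1.1)
    (fun x x' p => add_mul x.1 x'.1 p.1.1)
    (fun c x p => smul_mul_assoc c x.1 p.1.1)
    (fun x p p' => mul_add x.1 p.1.1 p'.1.1)
    (fun c x p => mul_smul_comm c x.1 p.1.1)

/-- Balancing relations defining `Ae ⊗_E P` as a quotient of `Ae ⊗_k P`. -/
def subRel : Submodule k (rightFix S.toIdem ⊗[k] ↥P) :=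
  Submodule.span k
    {t | ∃ (x : rightFix S.toIdem) (c : S.E) (p : ↥P),
      t = (MulOpposite.op c • x) ⊗ₜ[k] p - x ⊗ₜ[k] (c • p)}

/-- The balanced tensor product `Ae ⊗_E P`. -/
def subTensor : Type u := (rightFix S.toIdem ⊗[k] ↥P) ⧸ subRel S P

instance : AddCommGroup (subTensor S P) :=
  inferInstanceAs (AddCommGroup ((rightFix S.toIdem ⊗[k] ↥P) ⧸ subRel S P))

instance : Module k (subTensor S P) :=
  inferInstanceAs (Module k ((rightFix S.toIdem ⊗[k] ↥P) ⧸ subRel S P))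

end CornerSubalgebra

end CornerSub


section Stmt16Aux

variable {k : Type u} [CommRing k] {A : Type u} [Ring A] [Algebra k A]

namespace Stmt16

variable (S : CornerSubalgebra k A) (P : Submodule S.E (leftFix S.toIdem))

/-- Left multiplication by `a` on `Ae`, as a `k`-linear map. -/
def mulLeft (a : A) : rightFix S.toIdem →ₗ[k] rightFix S.toIdem where
  toFun x := ⟨a * x.1, by rw [mul_assoc, x.2]⟩
  map_add' x y := Subtype.ext (mul_add a x.1 y.1)
  map_smul' c x := Subtype.ext (mul_smul_comm c a x.1)

/-- The underlying element of `Ae`. -/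
def rval {f : Idem A} (x : rightFix f) : A := x.1

/-- The underlying element of `E`. -/
def cval {S : CornerSubalgebra k A} (c : S.E) : A := c.1

/-- Coordinate map `Ae × P → (P →₀ A)`, `(x, q) ↦ (i ↦ x * s₀(q)_i)`. -/
def coord (s₀ : ↥P →ₗ[S.E] (↥P →₀ S.E)) :
    rightFix S.toIdem →ₗ[k] ↥P →ₗ[k] (↥P →₀ A) :=
  LinearMap.mk₂ k
    (fun x q => (s₀ q).mapRange (fun c => rval x * cval c)
      (by show rval x * cval (0 : S.E) = 0; rw [show cval (0 : S.E) = (0 : A) from rfl, mul_zero]))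
    (fun x x' q => by
      ext i
      simp only [Finsupp.mapRange_apply, Finsupp.add_apply]
      exact add_mul x.1 x'.1 _)
    (fun c x q => by
      ext i
      simp only [Finsupp.mapRange_apply, Finsupp.smul_apply]
      exact smul_mul_assoc c x.1 _)
    (fun x q q' => by
      ext i
      simp only [Finsupp.mapRange_apply, map_add, Finsupp.add_apply, Submodule.coe_add]
      exact mul_add x.1 _ _)
    (fun c x q => by
      have hsq : s₀ (c • q) = algebraMap k S.E c • s₀ q := by
        rw [← algebraMap_smul S.E c q, map_smul]
      ext i
      simp only [Finsupp.mapRange_apply, Finsupp.smul_apply, hsq, smul_eq_mul]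
      have hd : cval (algebraMap k S.E c * s₀ q i) = c • cval (s₀ q i) :=
        (smul_mul_assoc c S.e (s₀ q i).1).trans (congrArg _ (S.e_mul_val _))
      rw [hd]
      exact mul_smul_comm c x.1 _)

lemma lift_mulBil_mulLeft (a : A) (t : rightFix S.toIdem ⊗[k] ↥P) :
    TensorProduct.lift (CornerSubalgebra.mulBil S P) (LinearMap.rTensor ↥P (mulLeft S a) t)
      = a * TensorProduct.lift (CornerSubalgebra.mulBil S P) t := by
  induction t using TensorProduct.induction_on with
  | zero => simp
  | tmul x q =>
      simp only [LinearMap.rTensor_tmul, TensorProduct.lift.tmul, CornerSubalgebra.mulBil,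
        LinearMap.mk₂_apply]
      exact mul_assoc a x.1 q.1.1
  | add t1 t2 h1 h2 => simp only [map_add, h1, h2, mul_add]

lemma lift_coord_mulLeft (s₀ : ↥P →ₗ[S.E] (↥P →₀ S.E)) (a : A)
    (t : rightFix S.toIdem ⊗[k] ↥P) :
    TensorProduct.lift (coord S P s₀) (LinearMap.rTensor ↥P (mulLeft S a) t)
      = a • TensorProduct.lift (coord S P s₀) t := by
  induction t using TensorProduct.induction_on with
  | zero => simp
  | tmul x q =>
      simp only [LinearMap.rTensor_tmul, TensorProduct.lift.tmul, coord, LinearMap.mk₂_apply]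
      ext i
      simp only [Finsupp.mapRange_apply, Finsupp.smul_apply, smul_eq_mul]
      exact mul_assoc a x.1 _
  | add t1 t2 h1 h2 => simp only [map_add, h1, h2, smul_add]

lemma memJ (J : TwoSidedIdeal A) (heJ : S.e ∈ J) (q : ↥P) : q.1.1 ∈ J.asIdeal := by
  rw [TwoSidedIdeal.mem_asIdeal, ← q.1.2]
  exact J.mul_mem_right S.e q.1.1 heJ

/-- value of the "dual basis" linear combination. -/
lemma lc_coord (J : TwoSidedIdeal A) (heJ : S.e ∈ J)
    (s₀ : ↥P →ₗ[S.E] (↥P →₀ S.E))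
    (hs₀ : Finsupp.linearCombination S.E (id : ↥P → ↥P) ∘ₗ s₀ = LinearMap.id)
    (t : rightFix S.toIdem ⊗[k] ↥P) :
    ((Finsupp.linearCombination A (fun i : ↥P => (⟨i.1.1, memJ S P J heJ i⟩ : ↥(J.asIdeal))))
        (TensorProduct.lift (coord S P s₀) t) : A)
      = TensorProduct.lift (CornerSubalgebra.mulBil S P) t := by
  induction t using TensorProduct.induction_on with
  | zero => simp
  | add t1 t2 h1 h2 => rw [map_add, map_add, Submodule.coe_add, h1, h2, map_add]
  | tmul x q =>
      simp only [TensorProduct.lift.tmul, coord, CornerSubalgebra.mulBil, LinearMap.mk₂_apply]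
      change _ = rval x * q.1.1
      rw [Finsupp.linearCombination_apply,
        Finsupp.sum_mapRange_index (fun i => by rw [zero_smul])]
      set g := s₀ q with hg
      let val2 : ↥P →+ A :=
        { toFun := fun z => z.1.1, map_zero' := rfl, map_add' := fun _ _ => rfl }
      have hq : (q.1.1 : A) = g.sum (fun i c => cval c * i.1.1) := by
        have h1 : Finsupp.linearCombination S.E (id : ↥P → ↥P) g = q :=
          LinearMap.congr_fun hs₀ q
        rw [Finsupp.linearCombination_apply] at h1
        simp only [id_eq] at h1
        calc (q.1.1 : A) = val2 q := rfl
          _ = val2 (g.sum fun i c => c • i) := by rw [h1]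
          _ = g.sum (fun i c => val2 (c • i)) := map_finsuppSum val2 g _
          _ = g.sum (fun i c => cval c * i.1.1) := rfl
      rw [hq, Finsupp.mul_sum]
      rw [Finsupp.sum, Finsupp.sum, AddSubmonoidClass.coe_finset_sum]
      refine Finset.sum_congr rfl fun i _ => ?_
      show (x.1 * (g i).1) • (⟨i.1.1, memJ S P J heJ i⟩ : ↥(J.asIdeal)).1 = x.1 * ((g i).1 * i.1.1)
      exact mul_assoc _ _ _

end Stmt16

end Stmt16Aux

/-- Suppose there are an idempotent `e ∈ J`, a `k`-subalgebra `E ⊆ eAe`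
with identity `e`, and a projective `E`-submodule `P ⊆ eA` such that the multiplication map
`Ae ⊗_E P → J` is bijective.  If `A/J` is `k`-projective, then `J² = J` and `J` is
projective as a left `A`-module. -/
theorem stmt_16 (k : Type u) [CommRing k] [IsNoetherianRing k]
    (A : Type u) [Ring A] [Algebra k A] [Module.Finite k A] [Module.Projective k A]
    (J : TwoSidedIdeal A)
    (hAJ : Module.Projective k (A ⧸ (J.asIdeal.restrictScalars k)))
    (S : CornerSubalgebra k A) (heJ : S.e ∈ J)
    (P : Submodule S.E (leftFix S.toIdem))
    (hP : Module.Projective S.E P)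
    (ψ : CornerSubalgebra.subTensor S P ≃ₗ[k] (J.asIdeal.restrictScalars k))
    (hψ : ∀ t : rightFix S.toIdem ⊗[k] ↥P,
      (ψ (Submodule.Quotient.mk t) : A) = TensorProduct.lift (CornerSubalgebra.mulBil S P) t) :
    IsIdempotentIdeal k J ∧ Module.Projective A J.asIdeal := by
  classical
  obtain ⟨s₀, hs₀⟩ := Module.projective_def'.mp hP
  -- the lifted coordinate map kills the balancing relations
  have hker : CornerSubalgebra.subRel S P ≤
      LinearMap.ker (TensorProduct.lift (Stmt16.coord S P s₀)) := by
    rw [CornerSubalgebra.subRel, Submodule.span_le]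
    rintro t ⟨x, c, p, rfl⟩
    simp only [SetLike.mem_coe, LinearMap.mem_ker, map_sub, TensorProduct.lift.tmul]
    rw [sub_eq_zero]
    ext i
    simp only [Stmt16.coord, LinearMap.mk₂_apply, Finsupp.mapRange_apply]
    rw [map_smul s₀ c p, Finsupp.smul_apply, smul_eq_mul]
    show ((MulOpposite.op c • x).1) * (s₀ p i).1 = x.1 * (c * s₀ p i).1
    show (x.1 * c.1) * (s₀ p i).1 = x.1 * (c.1 * (s₀ p i).1)
    exact mul_assoc _ _ _
  -- Part 1 : J² = J
  have key : ∀ t : rightFix S.toIdem ⊗[k] ↥P,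
      TensorProduct.lift (CornerSubalgebra.mulBil S P) t ∈
        (J.asIdeal.restrictScalars k) * (J.asIdeal.restrictScalars k) := by
    intro t
    induction t using TensorProduct.induction_on with
    | zero => simp
    | add a b ha hb => rw [map_add]; exact add_mem ha hb
    | tmul y q =>
        simp only [TensorProduct.lift.tmul, CornerSubalgebra.mulBil, LinearMap.mk₂_apply]
        have h1 : y.1 * S.e ∈ J.asIdeal.restrictScalars k := by
          rw [Submodule.restrictScalars_mem, TwoSidedIdeal.mem_asIdeal]
          exact J.mul_mem_left y.1 S.e heJ
        have h2 : q.1.1 ∈ J.asIdeal.restrictScalars k := by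
          rw [Submodule.restrictScalars_mem]
          exact Stmt16.memJ S P J heJ q
        have := Submodule.mul_mem_mul h1 h2
        rwa [y.2] at this
  have hJJ : IsIdempotentIdeal k J := by
    unfold IsIdempotentIdeal
    apply le_antisymm
    · refine Submodule.mul_le.mpr fun m hm n hn => ?_
      rw [Submodule.restrictScalars_mem, TwoSidedIdeal.mem_asIdeal]
      rw [Submodule.restrictScalars_mem, TwoSidedIdeal.mem_asIdeal] at hn
      exact J.mul_mem_left m n hn
    · intro x hx
      obtain ⟨t₀, ht₀⟩ := Submodule.Quotient.mk_surjective (CornerSubalgebra.subRel S P)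
        (ψ.symm (⟨x, hx⟩ : ↥(J.asIdeal.restrictScalars k)))
      have hx' : x = TensorProduct.lift (CornerSubalgebra.mulBil S P) t₀ := by
        rw [← hψ t₀, ht₀, LinearEquiv.apply_symm_apply]
      rw [hx']
      exact key t₀
  -- Part 2 : projectivity
  let vJ : ↥P → ↥(J.asIdeal) := fun i => ⟨i.1.1, Stmt16.memJ S P J heJ i⟩
  let σ : CornerSubalgebra.subTensor S P →ₗ[k] (↥P →₀ A) :=
    (CornerSubalgebra.subRel S P).liftQ (TensorProduct.lift (Stmt16.coord S P s₀)) hker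
  let F : ↥(J.asIdeal) → (↥P →₀ A) := fun j => σ (ψ.symm ⟨j.1, j.2⟩)
  have hrep : ∀ j : ↥(J.asIdeal), ∃ t₀ : rightFix S.toIdem ⊗[k] ↥P,
      (j : A) = TensorProduct.lift (CornerSubalgebra.mulBil S P) t₀ := by
    intro j
    obtain ⟨t₀, ht₀⟩ := Submodule.Quotient.mk_surjective (CornerSubalgebra.subRel S P)
      (ψ.symm (⟨j.1, j.2⟩ : ↥(J.asIdeal.restrictScalars k)))
    exact ⟨t₀, by rw [← hψ t₀, ht₀, LinearEquiv.apply_symm_apply]⟩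
  have hF : ∀ (j : ↥(J.asIdeal)) (t₀ : rightFix S.toIdem ⊗[k] ↥P),
      (j : A) = TensorProduct.lift (CornerSubalgebra.mulBil S P) t₀ →
      F j = TensorProduct.lift (Stmt16.coord S P s₀) t₀ := by
    intro j t₀ h
    have h2 : ψ.symm ⟨j.1, j.2⟩ = Submodule.Quotient.mk t₀ := by
      exact (LinearEquiv.symm_apply_eq ψ).mpr (Subtype.ext (h.trans (hψ t₀).symm))
    show σ (ψ.symm ⟨j.1, j.2⟩) = _
    rw [h2]
    exact Submodule.liftQ_apply _ _ t₀
  let iMap : ↥(J.asIdeal) →ₗ[A] (↥P →₀ A) :=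
    { toFun := F
      map_add' := by
        intro j j'
        obtain ⟨t₁, h₁⟩ := hrep j
        obtain ⟨t₂, h₂⟩ := hrep j'
        rw [hF j t₁ h₁, hF j' t₂ h₂,
          hF (j + j') (t₁ + t₂) (by rw [map_add, ← h₁, ← h₂]; rfl), map_add]
      map_smul' := by
        intro a j
        obtain ⟨t₁, h₁⟩ := hrep j
        have ha : ((a • j : ↥(J.asIdeal)) : A)
            = TensorProduct.lift (CornerSubalgebra.mulBil S P)
                (LinearMap.rTensor ↥P (Stmt16.mulLeft S a) t₁) := by
          rw [Stmt16.lift_mulBil_mulLeft, ← h₁]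
          rfl
        show F (a • j) = a • F j
        rw [hF j t₁ h₁, hF (a • j) _ ha, Stmt16.lift_coord_mulLeft] }
  let sMap : (↥P →₀ A) →ₗ[A] ↥(J.asIdeal) := Finsupp.linearCombination A vJ
  have H : sMap.comp iMap = LinearMap.id := by
    ext j
    obtain ⟨t₁, h₁⟩ := hrep j
    show ((Finsupp.linearCombination A vJ) (F j) : A) = (j : A)
    rw [hF j t₁ h₁, h₁]
    exact Stmt16.lc_coord S P J heJ s₀ hs₀ t₁
  exact ⟨hJJ, Module.Projective.of_split iMap sMap H⟩

end
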